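/- Let q be a prime power, w = (w_0, …, w_m) a weight vector of positive integers, γ ≥ 1 an integer, and d ∈ ⟨w_0, …, w_m⟩_ℕ. Then e_q(γd; γw_0, γw_1, …, γw_m) = e_q(d; w_0, w_1, …, w_m). -/

import Mathlib

open MvPolynomial

noncomputable section

/-- `pSum q k = 1 + q + ⋯ + q^(k-1)`; so `p_m = pSum q (m+1)`. -/
def pSum (q k : ℕ) : ℕ := ∑ i ∈ Finset.range k, q ^ i

/-- Equivalence of nonzero vectors under weighted scaling by the algebraic closure. -/
def wRel (F : Type) [Field F] {m : ℕ} (w : Fin (m + 1) → ℕ)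
    (x y : {v : Fin (m + 1) → AlgebraicClosure F // v ≠ 0}) : Prop :=
  ∃ lam : (AlgebraicClosure F)ˣ, ∀ i, y.1 i = (lam : AlgebraicClosure F) ^ w i * x.1 i

/-- The weighted projective space `ℙ(w)` as set of orbits. -/
def PW (F : Type) [Field F] {m : ℕ} (w : Fin (m + 1) → ℕ) : Type :=
  Quot (wRel F w)

def PW.mk (F : Type) [Field F] {m : ℕ} (w : Fin (m + 1) → ℕ)
    (x : {v : Fin (m + 1) → AlgebraicClosure F // v ≠ 0}) : PW F w :=
  Quot.mk _ x

/-- The `𝔽_q`-rational points of `ℙ(w)`: orbits fixed by coordinatewise Frobenius. -/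
def ratPts (F : Type) [Field F] [Fintype F] {m : ℕ} (w : Fin (m + 1) → ℕ) :
    Set (PW F w) :=
  {c | ∃ x : {v : Fin (m + 1) → AlgebraicClosure F // v ≠ 0},
    PW.mk F w x = c ∧
    ∃ h : (fun i => x.1 i ^ Fintype.card F) ≠ (0 : Fin (m + 1) → AlgebraicClosure F),
      PW.mk F w ⟨fun i => x.1 i ^ Fintype.card F, h⟩ = c}

/-- `V_{ℙ(w)}(f)(𝔽_q)`: the rational points at which `f` vanishes. -/
def vanishSet (F : Type) [Field F] [Fintype F] {m : ℕ} (w : Fin (m + 1) → ℕ)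
    (f : MvPolynomial (Fin (m + 1)) F) : Set (PW F w) :=
  {c | c ∈ ratPts F w ∧ ∀ x, PW.mk F w x = c →
    MvPolynomial.eval x.1 (MvPolynomial.map (algebraMap F (AlgebraicClosure F)) f) = 0}

/-- `e_q(d; w)`: the maximal number of rational zeroes of a nonzero
weighted homogeneous polynomial of degree `d`. -/
def eMax (F : Type) [Field F] [Fintype F] {m : ℕ} (w : Fin (m + 1) → ℕ) (d : ℕ) : ℕ :=
  sSup {n | ∃ f : MvPolynomial (Fin (m + 1)) F,
    f ≠ 0 ∧ MvPolynomial.IsWeightedHomogeneous w f d ∧ n = (vanishSet F w f).ncard}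

/-- weighted degree of a monomial (exponent vector). -/
def wdeg {m : ℕ} (w : Fin (m + 1) → ℕ) (a : Fin (m + 1) →₀ ℕ) : ℕ := ∑ i, w i * a i

/-- degree-lexicographic order (weighted degree first, `x_0 < x_1 < ⋯ < x_m`). -/
def dlexLt {m : ℕ} (w : Fin (m + 1) → ℕ) (a b : Fin (m + 1) →₀ ℕ) : Prop :=
  wdeg w a < wdeg w b ∨
    (wdeg w a = wdeg w b ∧ ∃ i, a i < b i ∧ ∀ j, i < j → a j = b j)

/-- `a` is the initial monomial of `f` for the weighted deglex order. -/
def IsInitial (F : Type) [Field F] {m : ℕ} (w : Fin (m + 1) → ℕ)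
    (f : MvPolynomial (Fin (m + 1)) F) (a : Fin (m + 1) →₀ ℕ) : Prop :=
  a ∈ f.support ∧ ∀ b ∈ f.support, b ≠ a → dlexLt w b a

/-- The vanishing ideal `I(ℙ(w)(𝔽_q))`, generated by the homogeneous polynomials
vanishing at every rational point. -/
def vanishingIdeal (F : Type) [Field F] [Fintype F] {m : ℕ} (w : Fin (m + 1) → ℕ) :
    Ideal (MvPolynomial (Fin (m + 1)) F) :=
  Ideal.span {g | (∃ e, MvPolynomial.IsWeightedHomogeneous w g e) ∧
    ∀ c ∈ ratPts F w, ∀ x, PW.mk F w x = c →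
      MvPolynomial.eval x.1 (MvPolynomial.map (algebraMap F (AlgebraicClosure F)) g) = 0}

/-- `M̄`: monomials divisible by no initial monomial of a nonzero homogeneous
element of the vanishing ideal. -/
def Mbar (F : Type) [Field F] [Fintype F] {m : ℕ} (w : Fin (m + 1) → ℕ) :
    Set (Fin (m + 1) →₀ ℕ) :=
  {a | ¬ ∃ g : MvPolynomial (Fin (m + 1)) F, g ≠ 0 ∧ g ∈ vanishingIdeal F w ∧
    (∃ e, MvPolynomial.IsWeightedHomogeneous w g e) ∧ ∃ b, IsInitial F w g b ∧ b ≤ a}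

/-- `M̄_d`. -/
def MbarD (F : Type) [Field F] [Fintype F] {m : ℕ} (w : Fin (m + 1) → ℕ) (d : ℕ) :
    Set (Fin (m + 1) →₀ ℕ) :=
  {a ∈ Mbar F w | wdeg w a = d}

/-- `M̄_{d,i}`. -/
def MbarDI (F : Type) [Field F] [Fintype F] {m : ℕ} (w : Fin (m + 1) → ℕ) (d : ℕ)
    (i : Fin (m + 1)) : Set (Fin (m + 1) →₀ ℕ) :=
  {a ∈ MbarD F w d | (∀ t, t < i → a t = 0) ∧ 1 ≤ a i}

/-- The regularity set `reg(ℙ(w)(𝔽_q)) = {d ≥ 1 : |M̄_d| = p_m}`. -/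
def regSet (F : Type) [Field F] [Fintype F] {m : ℕ} (w : Fin (m + 1) → ℕ) : Set ℕ :=
  {d | 1 ≤ d ∧ (MbarD F w d).ncard = pSum (Fintype.card F) (m + 1)}

/-- Footprint bound at level `dtil`: number of monomials of `M̄_{dtil}` divisible by `a`. -/
def FB (F : Type) [Field F] [Fintype F] {m : ℕ} (w : Fin (m + 1) → ℕ) (dtil : ℕ)
    (a : Fin (m + 1) →₀ ℕ) : ℕ :=
  {b | b ∈ MbarD F w dtil ∧ a ≤ b}.ncard

/-- `FB_i`: number of monomials of `M̄_{dtil, i}` divisible by `a`. -/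
def FBi (F : Type) [Field F] [Fintype F] {m : ℕ} (w : Fin (m + 1) → ℕ) (dtil : ℕ)
    (i : Fin (m + 1)) (a : Fin (m + 1) →₀ ℕ) : ℕ :=
  {b | b ∈ MbarDI F w dtil i ∧ a ≤ b}.ncard

/-- Hilbert function of `𝔽_q[x]/I(ℙ(w)(𝔽_q))` at degree `d`. -/
def hilb (F : Type) [Field F] [Fintype F] {m : ℕ} (w : Fin (m + 1) → ℕ) (d : ℕ) : ℕ :=
  Module.finrank F
    (↥(weightedHomogeneousSubmodule F w d) ⧸
      (Submodule.comap (weightedHomogeneousSubmodule F w d).subtype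
        (Submodule.restrictScalars F (vanishingIdeal F w))))

/-- Denumerant: the number of representations `d = w0*i0 + w1*i1`. -/
def den (w0 w1 d : ℕ) : ℕ := {p : ℕ × ℕ | w0 * p.1 + w1 * p.2 = d}.ncard


/-- Equation (4.2) of the paper: rescaling all the weights and the
degree by a common factor `γ` does not change `e_q`. -/
theorem stmt19 (F : Type) [Field F] [Fintype F] (m : ℕ) (w : Fin (m + 1) → ℕ)
    (hpos : ∀ i, 1 ≤ w i) (γ : ℕ) (hγ : 1 ≤ γ)
    (d : ℕ) (hd : ∃ c : Fin (m + 1) → ℕ, d = ∑ i, w i * c i) :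
    eMax F (fun i => γ * w i) (γ * d) = eMax F w d := by
  have hγ0 : 0 < γ := hγ
  have hrel : wRel F (fun i => γ * w i) = wRel F w := by
    funext x y
    apply propext
    constructor
    · rintro ⟨μ, h⟩
      refine ⟨μ ^ γ, fun i => ?_⟩
      rw [h i, Units.val_pow_eq_pow_val, ← pow_mul]
    · rintro ⟨lam, h⟩
      obtain ⟨μ, hμ⟩ := IsAlgClosed.exists_pow_nat_eq ((lam : AlgebraicClosure F)) hγ0
      have hμ0 : μ ≠ 0 := by
        intro h0
        apply lam.ne_zero
        rw [← hμ, h0, zero_pow hγ0.ne']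
      refine ⟨Units.mk0 μ hμ0, fun i => ?_⟩
      show _ = μ ^ (γ * w i) * _
      rw [h i, pow_mul, hμ]
  have hweight : ∀ a : Fin (m + 1) →₀ ℕ,
      Finsupp.weight (fun i => γ * w i) a = γ * Finsupp.weight w a := by
    intro a
    simp only [Finsupp.weight_apply, Finsupp.sum, smul_eq_mul, Finset.mul_sum]
    exact Finset.sum_congr rfl fun i _ => by ring
  have hIWH : ∀ f : MvPolynomial (Fin (m + 1)) F,
      IsWeightedHomogeneous (fun i => γ * w i) f (γ * d) ↔ IsWeightedHomogeneous w f d := by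
    intro f
    constructor
    · intro h a ha
      have := h ha
      rw [hweight] at this
      exact Nat.eq_of_mul_eq_mul_left hγ0 this
    · intro h a ha
      rw [hweight, h ha]
  have hvs : ∀ f : MvPolynomial (Fin (m + 1)) F,
      (vanishSet F (fun i => γ * w i) f).ncard = (vanishSet F w f).ncard := by
    intro f
    simp only [vanishSet, ratPts, PW.mk, PW]
    have key : ∀ R : {v : Fin (m + 1) → AlgebraicClosure F // v ≠ 0} →
        {v : Fin (m + 1) → AlgebraicClosure F // v ≠ 0} → Prop, R = wRel F w →
        {c : Quot R | (∃ x : {v : Fin (m + 1) → AlgebraicClosure F // v ≠ 0}, Quot.mk R x = c ∧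
          ∃ h : (fun i => x.1 i ^ Fintype.card F) ≠ (0 : Fin (m + 1) → AlgebraicClosure F),
            Quot.mk R ⟨fun i => x.1 i ^ Fintype.card F, h⟩ = c) ∧
          ∀ x, Quot.mk R x = c →
            MvPolynomial.eval x.1 (MvPolynomial.map (algebraMap F (AlgebraicClosure F)) f) = 0}.ncard
          = (vanishSet F w f).ncard := by
      rintro R rfl
      rfl
    exact key _ hrel
  unfold eMax
  congr 1
  ext n
  constructor
  · rintro ⟨f, hf0, hfh, rfl⟩
    exact ⟨f, hf0, (hIWH f).1 hfh, hvs f⟩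
  · rintro ⟨f, hf0, hfh, rfl⟩
    exact ⟨f, hf0, (hIWH f).2 hfh, (hvs f).symm⟩

end
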